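/- For every positive integer n, nonnegative integer m, and real x > -1, the modified Bell polynomial satisfies P_m(H_n^{(1)}(x), ..., H_n^{(m)}(x)) = (1/B(n,1+x)) · ∫_0^∞ e^{-(1+x)y} (1-e^{-y})^{n-1} y^m/m! dy. -/

import Mathlib

/-- The modified Bell polynomials, defined by the generating function
`exp (∑_{k≥1} x_k z^k / k) = ∑_{m≥0} P_m(x_1,…,x_m) z^m`, via the
equivalent recursion `(m+1) P_{m+1} = ∑_{k=1}^{m+1} x_k P_{m+1-k}`. -/
noncomputable def modifiedBell (x : ℕ → ℝ) : ℕ → ℝ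
  | 0 => 1
  | (m + 1) => ((m : ℝ) + 1)⁻¹ *
      ∑ k ∈ Finset.range (m + 1), x (k + 1) * modifiedBell x (m - k)
  decreasing_by omega

/-- The Euler beta function `B(a,b) = Γ(a)Γ(b)/Γ(a+b)` (real arguments). -/
noncomputable def eulerBeta (a b : ℝ) : ℝ :=
  Real.Gamma a * Real.Gamma b / Real.Gamma (a + b)

/-- Generalized harmonic number `H_n^{(k)}(x) = ∑_{j=1}^n 1/(j+x)^k`. -/
noncomputable def genHarmonic (n k : ℕ) (x : ℝ) : ℝ :=
  ∑ j ∈ Finset.Icc 1 n, 1 / ((j : ℝ) + x) ^ k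

open Finset MeasureTheory

section Aux

/-! ### Complete homogeneous symmetric functions of a list, and Newton's identity -/

noncomputable def hsym : List ℝ → ℕ → ℝ
  | _, 0 => 1
  | [], _ + 1 => 0
  | a :: t, m + 1 => hsym t (m + 1) + a * hsym (a :: t) m
  termination_by l m => (l.length, m)

@[simp] lemma hsym_zero (l : List ℝ) : hsym l 0 = 1 := by cases l <;> simp [hsym]
@[simp] lemma hsym_nil_succ (m : ℕ) : hsym [] (m + 1) = 0 := by simp [hsym]
lemma hsym_cons (a : ℝ) (t : List ℝ) (m : ℕ) :
    hsym (a :: t) (m + 1) = hsym t (m + 1) + a * hsym (a :: t) m := by rw [hsym]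

lemma hsym_cons_expand (a : ℝ) (t : List ℝ) (m : ℕ) :
    hsym (a :: t) m = ∑ i ∈ range (m + 1), a ^ i * hsym t (m - i) := by
  induction m with
  | zero => simp
  | succ m ih =>
      rw [hsym_cons, ih, Finset.sum_range_succ' (fun i => a ^ i * hsym t (m + 1 - i))]
      have h1 : ∀ i ∈ range (m + 1),
          a ^ (i + 1) * hsym t (m + 1 - (i + 1)) = a * (a ^ i * hsym t (m - i)) := by
        intro i _
        have h2 : m + 1 - (i + 1) = m - i := by omega
        rw [h2, pow_succ]; ring
      rw [Finset.sum_congr rfl h1, ← Finset.mul_sum]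
      simp; ring

lemma tri_swap (m : ℕ) (f : ℕ → ℕ → ℝ) :
    ∑ k ∈ range (m + 1), ∑ i ∈ range (m + 1 - k), f k i =
      ∑ i ∈ range (m + 1), ∑ k ∈ range (m + 1 - i), f k i := by
  rw [Finset.sum_sigma', Finset.sum_sigma']
  apply Finset.sum_nbij' (i := fun p => ⟨p.2, p.1⟩) (j := fun p => ⟨p.2, p.1⟩) <;>
    simp <;> omega

lemma tri_diag (m : ℕ) (g : ℕ → ℕ → ℝ) :
    ∑ k ∈ range (m + 1), ∑ i ∈ range (m + 1 - k), g k (k + i) =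
      ∑ j ∈ range (m + 1), ∑ k ∈ range (j + 1), g k j := by
  rw [Finset.sum_sigma', Finset.sum_sigma']
  apply Finset.sum_nbij' (i := fun p => (⟨p.1 + p.2, p.1⟩ : Σ _ : ℕ, ℕ))
    (j := fun p => (⟨p.2, p.1 - p.2⟩ : Σ _ : ℕ, ℕ)) <;>
      intro p hp <;> simp at hp ⊢ <;> try omega
  all_goals (congr 1; omega)

noncomputable def psum (l : List ℝ) (k : ℕ) : ℝ := (l.map (· ^ k)).sum

@[simp] lemma psum_nil (k : ℕ) : psum [] k = 0 := rfl
lemma psum_cons (a : ℝ) (t : List ℝ) (k : ℕ) : psum (a :: t) k = a ^ k + psum t k := rfl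

lemma newton (l : List ℝ) (m : ℕ) :
    ((m : ℝ) + 1) * hsym l (m + 1) = ∑ k ∈ range (m + 1), psum l (k + 1) * hsym l (m - k) := by
  induction l generalizing m with
  | nil => simp
  | cons a t ih =>
    have hsplit : ∀ k ∈ range (m + 1), psum (a :: t) (k + 1) * hsym (a :: t) (m - k)
        = a ^ (k + 1) * hsym (a :: t) (m - k) + psum t (k + 1) * hsym (a :: t) (m - k) := by
      intro k _; rw [psum_cons]; ring
    rw [Finset.sum_congr rfl hsplit, Finset.sum_add_distrib]
    have hB : ∑ k ∈ range (m + 1), a ^ (k + 1) * hsym (a :: t) (m - k)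
        = ∑ j ∈ range (m + 1), ((j : ℝ) + 1) * (a ^ (j + 1) * hsym t (m - j)) := by
      have e1 : ∀ k ∈ range (m + 1), a ^ (k + 1) * hsym (a :: t) (m - k)
          = ∑ i ∈ range (m + 1 - k), a ^ ((k + i) + 1) * hsym t (m - (k + i)) := by
        intro k hk
        rw [hsym_cons_expand, Finset.mul_sum]
        have h3 : m - k + 1 = m + 1 - k := by simp at hk; omega
        rw [h3]
        refine Finset.sum_congr rfl fun i _ => ?_
        have h2 : m - k - i = m - (k + i) := by omega
        rw [h2, pow_succ, pow_add]; ring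
      rw [Finset.sum_congr rfl e1,
        tri_diag m (fun k j => a ^ (j + 1) * hsym t (m - j))]
      refine Finset.sum_congr rfl fun j _ => ?_
      rw [Finset.sum_const, card_range, nsmul_eq_mul]
      push_cast; ring
    have hA : ∑ k ∈ range (m + 1), psum t (k + 1) * hsym (a :: t) (m - k)
        = ∑ i ∈ range (m + 1), ((m : ℝ) - i + 1) * (a ^ i * hsym t (m + 1 - i)) := by
      have e1 : ∀ k ∈ range (m + 1), psum t (k + 1) * hsym (a :: t) (m - k)
          = ∑ i ∈ range (m + 1 - k), psum t (k + 1) * a ^ i * hsym t (m - k - i) := by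
        intro k hk
        rw [hsym_cons_expand, Finset.mul_sum]
        have h3 : m - k + 1 = m + 1 - k := by simp at hk; omega
        rw [h3]
        refine Finset.sum_congr rfl fun i _ => ?_
        ring
      rw [Finset.sum_congr rfl e1,
        tri_swap m (fun k i => psum t (k + 1) * a ^ i * hsym t (m - k - i))]
      refine Finset.sum_congr rfl fun i hi => ?_
      simp only [mem_range] at hi
      have hi' : i ≤ m := by omega
      have h4 : m + 1 - i = (m - i) + 1 := by omega
      rw [h4]
      have e2 : ∀ k ∈ range ((m - i) + 1),
          psum t (k + 1) * a ^ i * hsym t (m - k - i)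
            = a ^ i * (psum t (k + 1) * hsym t ((m - i) - k)) := by
        intro k _
        have h5 : m - k - i = m - i - k := by omega
        rw [h5]; ring
      rw [Finset.sum_congr rfl e2, ← Finset.mul_sum, ← ih (m - i)]
      have h6 : ((m - i : ℕ) : ℝ) = (m : ℝ) - (i : ℝ) := by
        push_cast [hi']; ring
      rw [h6]; ring
    rw [hA, hB, hsym_cons_expand a t (m + 1), Finset.mul_sum]
    rw [Finset.sum_range_succ' (fun i => ((m : ℝ) + 1) * (a ^ i * hsym t (m + 1 - i)))]
    rw [Finset.sum_range_succ' (fun i => ((m : ℝ) - i + 1) * (a ^ i * hsym t (m + 1 - i)))]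
    have hz : ∑ i ∈ range m,
        ((m : ℝ) - (i + 1 : ℕ) + 1) * (a ^ (i + 1) * hsym t (m + 1 - (i + 1)))
        = ∑ i ∈ range (m + 1),
        ((m : ℝ) - (i + 1 : ℕ) + 1) * (a ^ (i + 1) * hsym t (m + 1 - (i + 1))) := by
      rw [Finset.sum_range_succ]
      have h8 : ((m : ℝ) - ((m + 1 : ℕ) : ℝ) + 1) = 0 := by push_cast; ring
      rw [h8, zero_mul, add_zero]
    rw [hz, ← add_assoc, ← Finset.sum_add_distrib]
    congr 1
    · refine Finset.sum_congr rfl fun i _ => ?_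
      have h7 : m + 1 - (i + 1) = m - i := by omega
      rw [h7]; push_cast; ring
    · push_cast; ring

/-! ### The partial-fraction side -/

noncomputable def Cprod (n : ℕ) (x : ℝ) : ℝ := ∏ l ∈ range n, ((l : ℝ) + 1 + x)

noncomputable def Gfun (n p : ℕ) (x : ℝ) : ℝ :=
  Cprod n x / (n - 1).factorial *
    ∑ i ∈ range n, (-1 : ℝ) ^ i * ((n - 1).choose i) * (((i : ℝ) + 1 + x) ^ p)⁻¹

lemma Cprod_succ (n : ℕ) (x : ℝ) : Cprod (n + 1) x = (1 + x) * Cprod n (x + 1) := by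
  unfold Cprod
  rw [Finset.prod_range_succ']
  have h : ∀ l ∈ range n, (((l + 1 : ℕ) : ℝ) + 1 + x) = ((l : ℝ) + 1 + (x + 1)) := by
    intro l _; push_cast; ring
  rw [Finset.prod_congr rfl h]
  push_cast; ring

lemma G_rec (n p : ℕ) (x : ℝ) (hx : -1 < x) :
    Gfun (n + 1) (p + 1) x = Gfun n (p + 1) (x + 1) + (1 + x)⁻¹ * Gfun (n + 1) p x := by
  have hx0 : (0:ℝ) < 1 + x := by linarith
  have hb : ∀ i : ℕ, (0:ℝ) < (i : ℝ) + 1 + x := by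
    intro i; have h0 : (0:ℝ) ≤ i := Nat.cast_nonneg i; linarith
  have point : ∀ i : ℕ, (((i:ℝ) + 1 + x) ^ (p+1))⁻¹ - (1 + x)⁻¹ * (((i:ℝ) + 1 + x) ^ p)⁻¹
      = -(i:ℝ) * (1 + x)⁻¹ * (((i:ℝ) + 1 + x) ^ (p+1))⁻¹ := by
    intro i
    have h1 : ((i:ℝ) + 1 + x) ≠ 0 := (hb i).ne'
    have h2 : ((i:ℝ) + 1 + x) ^ p ≠ 0 := pow_ne_zero _ h1
    rw [pow_succ]
    field_simp
    ring
  cases n with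
  | zero =>
      simp only [Gfun, Cprod, Finset.range_one, Finset.range_zero, Finset.sum_empty,
        Finset.prod_range_one, Finset.sum_singleton, Nat.cast_zero]
      norm_num
      rw [show ((1:ℝ) + x) ^ (p+1) = (1+x)^p * (1+x) by rw [pow_succ]]
      field_simp
  | succ n =>
      have step1 : Gfun (n + 2) (p + 1) x - (1 + x)⁻¹ * Gfun (n + 2) p x
          = Cprod (n + 2) x / (n + 1).factorial *
            ∑ i ∈ range (n + 2), (-1:ℝ)^i * ((n+1).choose i) *
              ((((i:ℝ) + 1 + x) ^ (p+1))⁻¹ - (1 + x)⁻¹ * (((i:ℝ) + 1 + x) ^ p)⁻¹) := by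
        unfold Gfun
        have hred : n + 2 - 1 = n + 1 := by omega
        rw [hred]
        simp only [Finset.mul_sum]
        rw [← Finset.sum_sub_distrib]
        refine Finset.sum_congr rfl fun i _ => ?_
        ring
      have step2 : ∑ i ∈ range (n + 2), (-1:ℝ)^i * ((n+1).choose i) *
            ((((i:ℝ) + 1 + x) ^ (p+1))⁻¹ - (1 + x)⁻¹ * (((i:ℝ) + 1 + x) ^ p)⁻¹)
          = (1 + x)⁻¹ * ((n:ℝ) + 1) * ∑ i ∈ range (n + 1), (-1:ℝ)^i * ((n).choose i) *
              (((i:ℝ) + 1 + (x + 1)) ^ (p+1))⁻¹ := by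
        have e : ∀ i ∈ range (n + 2), (-1:ℝ)^i * ((n+1).choose i) *
              ((((i:ℝ) + 1 + x) ^ (p+1))⁻¹ - (1 + x)⁻¹ * (((i:ℝ) + 1 + x) ^ p)⁻¹)
            = (-1:ℝ)^i * ((n+1).choose i) *
              (-(i:ℝ) * (1 + x)⁻¹ * (((i:ℝ) + 1 + x) ^ (p+1))⁻¹) := by
          intro i _; rw [point i]
        rw [Finset.sum_congr rfl e,
          Finset.sum_range_succ' (fun i => (-1:ℝ)^i * ((n+1).choose i) *
            (-(i:ℝ) * (1 + x)⁻¹ * (((i:ℝ) + 1 + x) ^ (p+1))⁻¹))]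
        simp only [Nat.cast_zero, neg_zero, zero_mul, mul_zero, add_zero]
        rw [Finset.mul_sum]
        refine Finset.sum_congr rfl fun i _ => ?_
        have hc : ((i:ℝ)+1) * (((n+1).choose (i+1) : ℕ) : ℝ) = ((n:ℝ)+1) * ((n.choose i : ℕ) : ℝ) := by
          have h := Nat.add_one_mul_choose_eq n i
          have h'' : (((n+1) * n.choose i : ℕ) : ℝ) = (((n+1).choose (i+1) * (i+1) : ℕ) : ℝ) := by
            exact_mod_cast h
          push_cast at h'' ⊢
          linear_combination -h''
        have harg : ((i:ℝ) + 1 + (x+1)) = (((i+1:ℕ):ℝ) + 1 + x) := by push_cast; ring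
        rw [harg]
        push_cast
        linear_combination ((-1:ℝ)^i * (1+x)⁻¹ * ((((i:ℝ)+1) + 1 + x)^(p+1))⁻¹) * hc
      have key : Gfun (n + 2) (p + 1) x - (1 + x)⁻¹ * Gfun (n + 2) p x
          = Gfun (n + 1) (p + 1) (x + 1) := by
        rw [step1, step2]
        unfold Gfun
        have hred2 : n + 1 - 1 = n := by omega
        rw [hred2, Cprod_succ (n+1) x, Nat.factorial_succ]
        have hf : ((n.factorial : ℕ) : ℝ) ≠ 0 := Nat.cast_ne_zero.mpr (Nat.factorial_ne_zero n)
        push_cast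
        field_simp
      linarith [key]

/-! ### Identification of `modifiedBell` with `hsym`, and `hsym` with `Gfun` -/

lemma modifiedBell_eq_hsym (l : List ℝ) (x : ℕ → ℝ) (hx : ∀ k, x k = psum l k) (m : ℕ) :
    modifiedBell x m = hsym l m := by
  induction m using Nat.strong_induction_on with
  | _ m ihm =>
    match m with
    | 0 => rw [hsym_zero]; simp [modifiedBell]
    | m + 1 =>
      rw [modifiedBell]
      have h1 : ∀ k ∈ range (m + 1), x (k + 1) * modifiedBell x (m - k)
          = psum l (k + 1) * hsym l (m - k) := by
        intro k hk
        rw [hx, ihm (m - k) (by omega)]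
      rw [Finset.sum_congr rfl h1, ← newton]
      have h2 : ((m : ℝ) + 1) ≠ 0 := by positivity
      field_simp

lemma G_zero (n : ℕ) (x : ℝ) : Gfun (n + 2) 0 x = 0 := by
  unfold Gfun
  simp only [pow_zero, inv_one, mul_one]
  have h3 : (n + 2 - 1) = n + 1 := rfl
  rw [h3]
  have h : ∑ i ∈ range (n + 2), (-1:ℝ)^i * ((n+1).choose i) = 0 := by
    have h2 := Int.alternating_sum_range_choose_of_ne (n := n + 1) (by omega)
    exact_mod_cast h2
  rw [h, mul_zero]

lemma G_one (n : ℕ) (x : ℝ) (hx : -1 < x) : Gfun (n + 1) 1 x = 1 := by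
  induction n generalizing x with
  | zero =>
      unfold Gfun Cprod
      simp only [Finset.range_one, Finset.sum_singleton, Finset.prod_range_one,
        Nat.cast_zero, pow_one]
      have h1 : (1:ℝ) + x ≠ 0 := by linarith
      norm_num
      field_simp
  | succ n ih =>
      have hrec := G_rec (n + 1) 0 x hx
      norm_num at hrec
      rw [hrec, ih (x + 1) (by linarith), G_zero, mul_zero, add_zero]

noncomputable def listOf : ℕ → ℝ → List ℝ
  | 0, _ => []
  | n + 1, x => (1 + x)⁻¹ :: listOf n (x + 1)

lemma hsym_listOf_succ (n : ℕ) (x : ℝ) (hx : -1 < x) (m : ℕ) :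
    hsym (listOf n x) (m + 1) = Gfun n (m + 2) x := by
  induction n generalizing x m with
  | zero => simp [listOf, hsym, Gfun]
  | succ n ih =>
      induction m with
      | zero =>
          have hrec : Gfun (n + 1) 2 x = Gfun n 2 (x + 1) + (1 + x)⁻¹ * Gfun (n + 1) 1 x := by
            simpa using G_rec n 1 x hx
          have h2 : hsym (listOf n (x + 1)) 1 = Gfun n 2 (x + 1) := by
            simpa using ih (x + 1) (by linarith) 0
          show hsym ((1 + x)⁻¹ :: listOf n (x + 1)) 1 = Gfun (n + 1) 2 x
          rw [hsym_cons, h2, hsym_zero, mul_one, hrec, G_one n x hx, mul_one]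
      | succ m ihm =>
          have hrec := G_rec n (m + 2) x hx
          have h2 : hsym (listOf n (x + 1)) (m + 2) = Gfun n (m + 3) (x + 1) := by
            have := ih (x + 1) (by linarith) (m + 1)
            norm_num at this ⊢
            convert this using 2 <;> omega
          have h3 : hsym ((1 + x)⁻¹ :: listOf n (x + 1)) (m + 1) = Gfun (n + 1) (m + 2) x := ihm
          show hsym ((1 + x)⁻¹ :: listOf n (x + 1)) (m + 2) = Gfun (n + 1) (m + 3) x
          rw [hsym_cons, h2, h3]
          have hrec' : Gfun (n + 1) (m + 3) x
              = Gfun n (m + 3) (x + 1) + (1 + x)⁻¹ * Gfun (n + 1) (m + 2) x := hrec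
          rw [hrec']

lemma hsym_listOf (n m : ℕ) (x : ℝ) (hx : -1 < x) :
    hsym (listOf (n + 1) x) m = Gfun (n + 1) (m + 1) x := by
  cases m with
  | zero => rw [hsym_zero, G_one n x hx]
  | succ m => exact hsym_listOf_succ (n + 1) x hx m

lemma genHarmonic_succ (n k : ℕ) (x : ℝ) :
    genHarmonic (n + 1) k x = 1 / (1 + x) ^ k + genHarmonic n k (x + 1) := by
  induction n generalizing x with
  | zero =>
      unfold genHarmonic
      simp
  | succ n ih =>
      have e1 : (∑ j ∈ Finset.Icc 1 (n + 1), 1 / ((j:ℝ) + x) ^ k)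
          = 1 / (1 + x) ^ k + ∑ j ∈ Finset.Icc 1 n, 1 / ((j:ℝ) + (x + 1)) ^ k := ih x
      unfold genHarmonic
      rw [Finset.sum_Icc_succ_top (by omega : 1 ≤ n + 1 + 1) (fun j => 1 / ((j:ℝ) + x) ^ k),
        Finset.sum_Icc_succ_top (by omega : 1 ≤ n + 1) (fun j => 1 / ((j:ℝ) + (x + 1)) ^ k),
        e1]
      have e3 : (((n + 1 + 1 : ℕ)) : ℝ) + x = (((n + 1 : ℕ)) : ℝ) + (x + 1) := by
        push_cast; ring
      rw [e3]
      ring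

lemma psum_listOf (n : ℕ) (x : ℝ) (k : ℕ) : psum (listOf n x) k = genHarmonic n k x := by
  induction n generalizing x with
  | zero => simp [listOf, genHarmonic]
  | succ n ih =>
      rw [genHarmonic_succ]
      show psum ((1 + x)⁻¹ :: listOf n (x + 1)) k = _
      rw [psum_cons, ih (x + 1), one_div, inv_pow]

/-! ### The analytic side -/

lemma integral_exp_pow (c : ℝ) (hc : 0 < c) (m : ℕ) :
    ∫ y in Set.Ioi (0:ℝ), Real.exp (-c * y) * y ^ m = m.factorial / c ^ (m + 1) := by
  have h := Real.integral_rpow_mul_exp_neg_mul_Ioi (a := (m:ℝ) + 1) (by positivity) hc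
  have e1 : ∀ y ∈ Set.Ioi (0:ℝ),
      y ^ ((m:ℝ) + 1 - 1) * Real.exp (-(c * y)) = Real.exp (-c * y) * y ^ m := by
    intro y hy
    rw [add_sub_cancel_right, Real.rpow_natCast, neg_mul]
    ring
  rw [← MeasureTheory.setIntegral_congr_fun measurableSet_Ioi e1, h,
    Real.Gamma_nat_eq_factorial,
    show (m:ℝ) + 1 = ((m + 1 : ℕ) : ℝ) by push_cast; ring, Real.rpow_natCast,
    div_pow, one_pow]
  field_simp

lemma integrable_exp_pow (c : ℝ) (hc : 0 < c) (m : ℕ) :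
    MeasureTheory.IntegrableOn (fun y => Real.exp (-c * y) * y ^ m) (Set.Ioi (0:ℝ)) := by
  have h := integrableOn_rpow_mul_exp_neg_mul_rpow (s := (m:ℝ)) (p := 1)
    (by have h0 : (0:ℝ) ≤ m := Nat.cast_nonneg m; linarith) one_pos hc
  apply (h.congr_fun ?_ measurableSet_Ioi)
  intro y hy
  simp only [Real.rpow_one, Real.rpow_natCast]
  ring

lemma integral_main (n m : ℕ) (x : ℝ) (hx : -1 < x) :
    ∫ y in Set.Ioi (0:ℝ),
        Real.exp (-(1 + x) * y) * (1 - Real.exp (-y)) ^ n * y ^ m / (m.factorial)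
      = ∑ i ∈ range (n + 1), (-1:ℝ) ^ i * (n.choose i) * (((i:ℝ) + 1 + x) ^ (m + 1))⁻¹ := by
  have hb : ∀ i : ℕ, (0:ℝ) < (i : ℝ) + 1 + x := by
    intro i; have h0 : (0:ℝ) ≤ i := Nat.cast_nonneg i; linarith
  have hfi : ∀ y ∈ Set.Ioi (0:ℝ),
      Real.exp (-(1 + x) * y) * (1 - Real.exp (-y)) ^ n * y ^ m / (m.factorial)
        = ∑ i ∈ range (n + 1), ((-1:ℝ) ^ i * (n.choose i) / m.factorial) *
            (Real.exp (-((i:ℝ) + 1 + x) * y) * y ^ m) := by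
    intro y _
    have hbin : (1 - Real.exp (-y)) ^ n
        = ∑ i ∈ range (n + 1), (-Real.exp (-y)) ^ i * (1:ℝ) ^ (n - i) * (n.choose i) := by
      rw [show (1 : ℝ) - Real.exp (-y) = -Real.exp (-y) + 1 by ring, add_pow]
    rw [hbin, Finset.mul_sum, Finset.sum_mul, Finset.sum_div]
    refine Finset.sum_congr rfl fun i _ => ?_
    have hexp : Real.exp (-(1 + x) * y) * (Real.exp (-y)) ^ i
        = Real.exp (-((i:ℝ) + 1 + x) * y) := by
      rw [← Real.exp_nat_mul, ← Real.exp_add]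
      congr 1
      ring
    rw [one_pow, mul_one, neg_pow, ← hexp]
    field_simp
  rw [MeasureTheory.setIntegral_congr_fun measurableSet_Ioi hfi]
  rw [MeasureTheory.integral_finset_sum]
  · refine Finset.sum_congr rfl fun i _ => ?_
    rw [MeasureTheory.integral_const_mul, integral_exp_pow _ (hb i)]
    have hpow : ((i:ℝ) + 1 + x) ^ (m + 1) ≠ 0 := pow_ne_zero _ (hb i).ne'
    have hfac : (m.factorial : ℝ) ≠ 0 := Nat.cast_ne_zero.mpr (Nat.factorial_ne_zero m)
    field_simp
  · intro i _
    exact (integrable_exp_pow _ (hb i) m).const_mul _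

lemma Gamma_shift (n : ℕ) (x : ℝ) (hx : -1 < x) :
    Real.Gamma ((n : ℝ) + (1 + x)) = Cprod n x * Real.Gamma (1 + x) := by
  induction n with
  | zero => simp [Cprod]
  | succ n ih =>
      have harg : ((n + 1 : ℕ) : ℝ) + (1 + x) = ((n:ℝ) + (1 + x)) + 1 := by push_cast; ring
      have hne : (n:ℝ) + (1 + x) ≠ 0 := by
        have h0 : (0:ℝ) ≤ n := Nat.cast_nonneg n; linarith
      rw [harg, Real.Gamma_add_one hne, ih]
      unfold Cprod
      rw [Finset.prod_range_succ]
      ring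

lemma beta_inv (n : ℕ) (hn : 0 < n) (x : ℝ) (hx : -1 < x) :
    1 / eulerBeta (n : ℝ) (1 + x) = Cprod n x / (n - 1).factorial := by
  have hx0 : (0:ℝ) < 1 + x := by linarith
  have hG1 : Real.Gamma (n : ℝ) = (n - 1).factorial := by
    have : ((n - 1 : ℕ) : ℝ) + 1 = (n : ℝ) := by
      have : n - 1 + 1 = n := by omega
      exact_mod_cast congrArg (Nat.cast : ℕ → ℝ) this
    rw [← this, Real.Gamma_nat_eq_factorial]
  have hGx : (0:ℝ) < Real.Gamma (1 + x) := Real.Gamma_pos_of_pos hx0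
  have hC : (0:ℝ) < Cprod n x := by
    apply Finset.prod_pos
    intro l _
    have h0 : (0:ℝ) ≤ l := Nat.cast_nonneg l; linarith
  have hfac : (0:ℝ) < ((n-1).factorial : ℝ) := by
    exact_mod_cast Nat.factorial_pos (n-1)
  unfold eulerBeta
  rw [hG1, Gamma_shift n x hx]
  field_simp

end Aux

theorem modifiedBell_eq_integral (n : ℕ) (hn : 0 < n) (m : ℕ) (x : ℝ) (hx : -1 < x) :
    modifiedBell (fun k => genHarmonic n k x) m =
      (1 / eulerBeta (n : ℝ) (1 + x)) *
        ∫ y in Set.Ioi (0 : ℝ),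
          Real.exp (-(1 + x) * y) * (1 - Real.exp (-y)) ^ (n - 1) * y ^ m / (m.factorial) := by
  obtain ⟨n', rfl⟩ : ∃ n', n = n' + 1 := ⟨n - 1, by omega⟩
  have hL : modifiedBell (fun k => genHarmonic (n' + 1) k x) m
      = Gfun (n' + 1) (m + 1) x := by
    rw [modifiedBell_eq_hsym (listOf (n' + 1) x) _
      (fun k => (psum_listOf (n' + 1) x k).symm) m]
    exact hsym_listOf n' m x hx
  have hred : n' + 1 - 1 = n' := by omega
  rw [hL, beta_inv (n' + 1) (by omega) x hx, hred, integral_main n' m x hx]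
  unfold Gfun
  rw [hred]
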